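/- ODE comparison for blowup of the L² norm: let ε > 0, and suppose B : [t₀, T_max) → (0,∞) is C², B'(t₀) > 0, and B''(t)B(t) − ((4+ε)/4)B'(t)² > 0 together with B''(t) > 0 for all t ∈ (t₀, T_max), where [t₀, T_max) is the maximal interval on which B remains finite. If B(t) → ∞ as t → T_max⁻, then T_max < t₀ + 4B(t₀)/(ε·B'(t₀)). -/

import Mathlib

open Filter Set

private lemma aux_div (P B₀ a ε : ℝ) (hP : P ≠ 0) (ha : a ≠ 0) (hε : ε ≠ 0) :
    (P * B₀) / (-(-(ε / 4) * P * a)) = 4 * B₀ / (ε * a) := by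
  field_simp

private lemma aux_root (p q a b s u : ℝ) (ha : a < 0) (hb : b < a) (hq0 : 0 < q)
    (h1 : q - p < a * (s - u)) : s + q / (-b) < u + p / (-a) := by
  have ha' : 0 < -a := by linarith
  have hb' : 0 < -b := by linarith
  have hq : q / (-b) < q / (-a) := div_lt_div_of_pos_left hq0 ha' (by linarith)
  have hP : p / (-a) * (-a) = p := div_mul_cancel₀ p (ne_of_gt ha')
  have hQ : q / (-a) * (-a) = q := div_mul_cancel₀ q (ne_of_gt ha')
  have h2 : q / (-a) ≤ p / (-a) - (s - u) := by nlinarith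
  linarith

theorem stmt_19 (t₀ Tmax ε : ℝ) (hT : t₀ < Tmax) (hε : 0 < ε)
    (B : ℝ → ℝ) (hB : ContDiffOn ℝ 2 B (Set.Ico t₀ Tmax))
    (hBpos : ∀ t ∈ Set.Ico t₀ Tmax, 0 < B t)
    (hB'0 : 0 < deriv B t₀)
    (hB'' : ∀ t ∈ Set.Ioo t₀ Tmax, 0 < deriv (deriv B) t)
    (hconc : ∀ t ∈ Set.Ioo t₀ Tmax,
      0 < deriv (deriv B) t * B t - ((4 + ε) / 4) * (deriv B t) ^ 2)
    (hblow : Tendsto B (nhdsWithin Tmax (Set.Iio Tmax)) atTop) :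
    Tmax < t₀ + 4 * B t₀ / (ε * deriv B t₀) := by
  set c : ℝ := -(ε / 4) with hc
  have hc0 : c < 0 := by rw [hc]; linarith
  have ht₀mem : t₀ ∈ Ico t₀ Tmax := ⟨le_rfl, hT⟩
  have hB₀ : 0 < B t₀ := hBpos t₀ ht₀mem
  -- B is differentiable at t₀ (two-sided), else deriv would be 0
  have hdB0 : DifferentiableAt ℝ B t₀ := by
    by_contra h
    rw [deriv_zero_of_not_differentiableAt h] at hB'0
    exact lt_irrefl 0 hB'0
  have hBIoo : ContDiffOn ℝ 2 B (Ioo t₀ Tmax) := hB.mono Ioo_subset_Ico_self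
  have hdiffAt : ∀ t ∈ Ioo t₀ Tmax, DifferentiableAt ℝ B t := fun t ht =>
    (hBIoo.differentiableOn (by norm_num)).differentiableAt (isOpen_Ioo.mem_nhds ht)
  have hdB : ∀ t ∈ Ico t₀ Tmax, DifferentiableAt ℝ B t := by
    intro t ht
    rcases eq_or_lt_of_le ht.1 with rfl | h
    · exact hdB0
    · exact hdiffAt t ⟨h, ht.2⟩
  -- deriv B is differentiable on the open interval
  have hdB' : ∀ t ∈ Ioo t₀ Tmax, HasDerivAt (deriv B) (deriv (deriv B) t) t := by
    intro t ht
    have h1 : ContDiffOn ℝ 1 (deriv B) (Ioo t₀ Tmax) :=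
      hBIoo.deriv_of_isOpen isOpen_Ioo (by norm_num)
    exact ((h1.differentiableOn (by norm_num)).differentiableAt
      (isOpen_Ioo.mem_nhds ht)).hasDerivAt
  -- deriv B is continuous on Ico
  have hderivEq : ∀ t ∈ Ico t₀ Tmax, derivWithin B (Ico t₀ Tmax) t = deriv B t := by
    intro t ht
    rcases eq_or_lt_of_le ht.1 with rfl | h
    · exact hdB0.derivWithin ((uniqueDiffOn_Ico t₀ Tmax) _ ht)
    · exact derivWithin_of_mem_nhds (Ico_mem_nhds h ht.2)
  have hcontdB : ContinuousOn (deriv B) (Ico t₀ Tmax) :=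
    (hB.continuousOn_derivWithin (uniqueDiffOn_Ico t₀ Tmax) one_le_two).congr
      fun t ht => (hderivEq t ht).symm
  have hcontB : ContinuousOn B (Ico t₀ Tmax) := hB.continuousOn
  -- the auxiliary function y = B ^ c and its derivative g
  set y : ℝ → ℝ := fun t => B t ^ c with hy
  set g : ℝ → ℝ := fun t => c * B t ^ (c - 1) * deriv B t with hg
  have hyd : ∀ t ∈ Ico t₀ Tmax, HasDerivAt y (g t) t := by
    intro t ht
    have hBt := hBpos t ht
    have h1 : HasDerivAt (fun x : ℝ => x ^ c) (c * B t ^ (c - 1)) (B t) :=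
      Real.hasDerivAt_rpow_const (Or.inl hBt.ne')
    exact h1.comp t (hdB t ht).hasDerivAt
  have hconty : ContinuousOn y (Ico t₀ Tmax) :=
    hcontB.rpow_const fun t ht => Or.inl (hBpos t ht).ne'
  -- g is strictly decreasing on Ico
  have hgd : ∀ t ∈ Ioo t₀ Tmax, HasDerivAt g
      (c * ((c - 1) * B t ^ (c - 2) * deriv B t) * deriv B t
        + c * B t ^ (c - 1) * deriv (deriv B) t) t := by
    intro t ht
    have hBt := hBpos t (Ioo_subset_Ico_self ht)
    have h1 : HasDerivAt (fun x : ℝ => x ^ (c - 1)) ((c - 1) * B t ^ (c - 1 - 1)) (B t) :=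
      Real.hasDerivAt_rpow_const (Or.inl hBt.ne')
    have h2 : HasDerivAt (fun s => B s ^ (c - 1)) ((c - 1) * B t ^ (c - 2) * deriv B t) t := by
      have h3 := h1.comp t (hdiffAt t ht).hasDerivAt
      have : c - 1 - 1 = c - 2 := by ring
      rw [this] at h3
      exact h3
    exact (h2.const_mul c).mul (hdB' t ht)
  have hgneg : ∀ t ∈ Ioo t₀ Tmax, deriv g t < 0 := by
    intro t ht
    rw [(hgd t ht).deriv]
    have hBt := hBpos t (Ioo_subset_Ico_self ht)
    have hkey := hconc t ht
    have hpow : 0 < B t ^ (c - 2) := Real.rpow_pos_of_pos hBt _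
    have e1 : B t ^ (c - 1) = B t ^ (c - 2) * B t := by
      have h4 : c - 1 = (c - 2) + 1 := by ring
      rw [h4, Real.rpow_add_one hBt.ne']
    rw [e1]
    have e2 : c * ((c - 1) * B t ^ (c - 2) * deriv B t) * deriv B t
        + c * (B t ^ (c - 2) * B t) * deriv (deriv B) t
        = c * B t ^ (c - 2) * (deriv (deriv B) t * B t - (1 - c) * (deriv B t) ^ 2) := by
      ring
    rw [e2]
    have e3 : (1 : ℝ) - c = (4 + ε) / 4 := by rw [hc]; ring
    rw [e3]
    exact mul_neg_of_neg_of_pos (mul_neg_of_neg_of_pos hc0 hpow) hkey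
  have hcontg : ContinuousOn g (Ico t₀ Tmax) :=
    ((continuousOn_const.mul
      (hcontB.rpow_const fun t ht => Or.inl (hBpos t ht).ne')).mul hcontdB)
  have hanti : StrictAntiOn g (Ico t₀ Tmax) := by
    apply strictAntiOn_of_deriv_neg (convex_Ico _ _) hcontg
    intro x hx
    rw [interior_Ico] at hx
    exact hgneg x hx
  -- mean value estimate
  have hmvt : ∀ s ∈ Ico t₀ Tmax, ∀ t ∈ Ioo s Tmax, y t - y s < g s * (t - s) := by
    intro s hs t ht
    have hsub : Icc s t ⊆ Ico t₀ Tmax := by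
      intro x hx
      exact ⟨le_trans hs.1 hx.1, lt_of_le_of_lt hx.2 ht.2⟩
    obtain ⟨ξ, hξ, hξeq⟩ := exists_hasDerivAt_eq_slope y g ht.1
      (hconty.mono hsub)
      (fun x hx => hyd x (hsub ⟨le_of_lt hx.1, le_of_lt hx.2⟩))
    have hξmem : ξ ∈ Ico t₀ Tmax := hsub ⟨le_of_lt hξ.1, le_of_lt hξ.2⟩
    have hlt : g ξ < g s := hanti hs hξmem hξ.1
    rw [hξeq] at hlt
    have hts : 0 < t - s := by linarith [ht.1]
    calc y t - y s = (y t - y s) / (t - s) * (t - s) := by field_simp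
    _ < g s * (t - s) := by
        apply mul_lt_mul_of_pos_right hlt hts
  -- main argument
  obtain ⟨t₁, ht₁⟩ : ∃ x, x ∈ Ioo t₀ Tmax := ⟨(t₀ + Tmax) / 2, by constructor <;> linarith⟩
  have ht₁I : t₁ ∈ Ico t₀ Tmax := Ioo_subset_Ico_self ht₁
  have hm₀ : g t₀ < 0 :=
    mul_neg_of_neg_of_pos
      (mul_neg_of_neg_of_pos hc0 (Real.rpow_pos_of_pos hB₀ _)) hB'0
  have hm : g t₁ < g t₀ := hanti ht₀mem ht₁I ht₁.1
  have hmneg : g t₁ < 0 := lt_trans hm hm₀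
  have h1 : y t₁ - y t₀ < g t₀ * (t₁ - t₀) := hmvt t₀ ht₀mem t₁ ht₁
  have hy1pos : 0 < y t₁ := Real.rpow_pos_of_pos (hBpos t₁ ht₁I) _
  have key : ∀ t ∈ Ioo t₁ Tmax, t < t₁ + y t₁ / (-g t₁) := by
    intro t ht
    have htI : t ∈ Ico t₀ Tmax := ⟨le_trans (le_of_lt ht₁.1) (le_of_lt ht.1), ht.2⟩
    have h2 := hmvt t₁ ht₁I t ht
    have hyt : 0 < y t := Real.rpow_pos_of_pos (hBpos t htI) _
    have h3 : (t - t₁) * (-g t₁) < y t₁ := by nlinarith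
    have h4 : t - t₁ < y t₁ / (-g t₁) :=
      (lt_div_iff₀ (by linarith : (0:ℝ) < -g t₁)).mpr h3
    linarith
  have hTR : Tmax ≤ t₁ + y t₁ / (-g t₁) := by
    by_contra h
    push_neg at h
    have hmax : max t₁ (t₁ + y t₁ / (-g t₁)) < Tmax := max_lt ht₁.2 h
    have hkey := key ((max t₁ (t₁ + y t₁ / (-g t₁)) + Tmax) / 2)
      ⟨by linarith [le_max_left t₁ (t₁ + y t₁ / (-g t₁))], by linarith⟩
    linarith [le_max_right t₁ (t₁ + y t₁ / (-g t₁))]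
  have hroot : t₁ + y t₁ / (-g t₁) < t₀ + y t₀ / (-g t₀) :=
    aux_root (y t₀) (y t₁) (g t₀) (g t₁) t₁ t₀ hm₀ hm hy1pos (by linarith)
  -- compute y t₀ / (-g t₀)
  have hfin : y t₀ / (-g t₀) = 4 * B t₀ / (ε * deriv B t₀) := by
    have e1 : y t₀ = B t₀ ^ (c - 1) * B t₀ := by
      rw [hy]
      simp only
      rw [← Real.rpow_add_one hB₀.ne' (c - 1)]
      congr 1
      ring
    have hp : (0:ℝ) < B t₀ ^ (c - 1) := Real.rpow_pos_of_pos hB₀ _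
    rw [e1, hg]
    simp only
    rw [hc]
    exact aux_div _ _ _ _ hp.ne' (ne_of_gt hB'0) (ne_of_gt hε)
  rw [hfin] at hroot
  linarith
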